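/- Let r ≥ 1 and work in the field ℚ(u_1,…,u_r) of rational functions in r indeterminates over ℚ; set q_i = u_i^2. Let m_1 ≥ m_2 ≥ … ≥ m_r ≥ 0 be integers, and let H_m denote the complete homogeneous symmetric polynomial of degree m in the 2r+1 elements q_1,…,q_r, 1, q_1^{−1},…,q_r^{−1}. Then (the Jacobi–Trudy identity for the spinor representations of Spin(2r+1), in alternant form): det[ q_i^{m_j + r + 1 − j} − q_i^{−(m_j + r + 1 − j)} ]_{i,j=1}^{r} = ∏_{i=1}^{r} (u_i + u_i^{−1}) · det[ H_{m_j + i − j} − H_{m_j + 1 − i − j} ]_{i,j=1}^{r} · det[ u_i^{2r + 1 − 2j} − u_i^{−(2r + 1 − 2j)} ]_{i,j=1}^{r}. -/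

import Mathlib

open Finset MvPolynomial

/-- Complete homogeneous symmetric polynomial of degree `m` (`ℤ`-indexed; zero for `m < 0`)
in the family of elements `x : ι → R`: the sum of all monomials of total degree `m`. -/
noncomputable def hpoly {R : Type*} [CommRing R] {ι : Type*} [Fintype ι] [DecidableEq ι]
    (x : ι → R) (m : ℤ) : R :=
  if m < 0 then 0
  else ∑ d ∈ (Fintype.piFinset fun _ : ι => Finset.range (m.toNat + 1)).filter
      (fun d => ∑ i, d i = m.toNat),
    ∏ i, x i ^ d i

namespace SpinJT

variable {K : Type*} [Field K]

section general
variable {ι : Type*} [Fintype ι] [DecidableEq ι] (x : ι → K)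

lemma hpoly_neg {m : ℤ} (h : m < 0) : hpoly x m = 0 := by rw [hpoly, if_pos h]

/-- the generating series of `hpoly`. -/
noncomputable def Hser : PowerSeries K := PowerSeries.mk fun n => hpoly x (n : ℤ)

lemma geom (a : K) :
    (1 - PowerSeries.C (R := K) a * PowerSeries.X) * (PowerSeries.mk fun n => a ^ n) = 1 := by
  ext n
  rw [sub_mul, one_mul, mul_assoc, map_sub]
  cases n with
  | zero => simp
  | succ n =>
    rw [PowerSeries.coeff_C_mul, PowerSeries.coeff_succ_X_mul]
    simp [pow_succ, mul_comm]

lemma hser_eq_prod : Hser x = ∏ i, PowerSeries.mk fun n => x i ^ n := by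
  ext n
  rw [PowerSeries.coeff_prod, Hser, PowerSeries.coeff_mk, hpoly,
    if_neg (by omega), Int.toNat_natCast]
  apply Finset.sum_nbij' (fun d => Finsupp.equivFunOnFinite.symm d)
      (fun l => (l : ι → ℕ))
  · intro d hd
    simp only [Finset.mem_filter, Fintype.mem_piFinset, Finset.mem_range] at hd
    simp only [Finset.mem_finsuppAntidiag]
    refine ⟨?_, Finset.subset_univ _⟩
    simpa [Finsupp.sum] using hd.2
  · intro l hl
    simp only [Finset.mem_finsuppAntidiag] at hl
    simp only [Finset.mem_filter, Fintype.mem_piFinset, Finset.mem_range]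
    constructor
    · intro i
      have : l i ≤ n := by
        rw [← hl.1]
        exact Finset.single_le_sum (f := fun i => l i) (fun _ _ => Nat.zero_le _)
          (Finset.mem_univ i)
      omega
    · exact hl.1
  · intro d _; simp [Finsupp.equivFunOnFinite]; rfl
  · intro l _; exact Finsupp.equivFunOnFinite_symm_coe l
  · intro d _
    simp [PowerSeries.coeff_mk]

lemma hser_mul_prod :
    Hser x * ∏ i, (1 - PowerSeries.C (R := K) (x i) * PowerSeries.X) = 1 := by
  rw [hser_eq_prod, ← Finset.prod_mul_distrib]
  rw [Finset.prod_congr rfl fun i _ => by rw [mul_comm, geom (x i)]]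
  simp

lemma hpoly_zero : hpoly x 0 = 1 := by
  have h0 : hpoly x ((0 : ℕ) : ℤ) = PowerSeries.constantCoeff (R := K) (Hser x) := by
    simp [Hser, ← PowerSeries.coeff_zero_eq_constantCoeff]
  rw [show (0 : ℤ) = ((0 : ℕ) : ℤ) by norm_num, h0, hser_eq_prod, map_prod]
  simp [← PowerSeries.coeff_zero_eq_constantCoeff]

end general

end SpinJT

namespace SpinJT

section main
variable {K : Type*} [Field K] {r : ℕ} (u : Fin r → K)

/-- The `2r+1` variables. -/
noncomputable def vars (u : Fin r → K) : (Fin r ⊕ (Unit ⊕ Fin r)) → K :=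
  Sum.elim (fun i => u i ^ 2) (Sum.elim (fun _ : Unit => (1 : K)) fun i => (u i ^ 2)⁻¹)

/-- The palindromic part of `phi`. -/
noncomputable def Pp (i : Fin r) : Polynomial K :=
  ∏ j ∈ Finset.univ.erase i,
    (1 - Polynomial.C (u j ^ 2 + (u j ^ 2)⁻¹) * Polynomial.X + Polynomial.X ^ 2)

/-- The polynomial relating powers series. -/
noncomputable def phi (i : Fin r) : Polynomial K :=
  Polynomial.C (u i ^ 2 - (u i ^ 2)⁻¹) * (Polynomial.X - Polynomial.X ^ 2) * Pp u i

lemma natDegree_quad (a : K) :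
    (1 - Polynomial.C a * Polynomial.X + Polynomial.X ^ 2).natDegree ≤ 2 := by
  apply le_trans (Polynomial.natDegree_add_le _ _)
  simp only [Polynomial.natDegree_X_pow, max_le_iff, le_refl, and_true]
  apply le_trans (Polynomial.natDegree_sub_le _ _)
  simp only [Polynomial.natDegree_one, max_le_iff, Nat.zero_le, true_and]
  apply le_trans (Polynomial.natDegree_mul_le)
  simp [Polynomial.natDegree_C]

lemma quad_eq (a : K) : 1 - Polynomial.C a * Polynomial.X + Polynomial.X ^ 2
    = Polynomial.C 1 * Polynomial.X ^ 0 + Polynomial.C (-a) * Polynomial.X ^ 1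
      + Polynomial.C 1 * Polynomial.X ^ 2 := by
  simp only [map_one, map_neg, pow_zero, pow_one]
  ring

lemma reflect_quad (a : K) :
    (1 - Polynomial.C a * Polynomial.X + Polynomial.X ^ 2).reflect 2
      = 1 - Polynomial.C a * Polynomial.X + Polynomial.X ^ 2 := by
  rw [quad_eq, Polynomial.reflect_add, Polynomial.reflect_add,
    Polynomial.reflect_C_mul_X_pow, Polynomial.reflect_C_mul_X_pow,
    Polynomial.reflect_C_mul_X_pow]
  norm_num [Polynomial.revAt_le]
  ring

lemma Pp_prop (s : Finset (Fin r)) :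
    (∏ j ∈ s, (1 - Polynomial.C (u j ^ 2 + (u j ^ 2)⁻¹) * Polynomial.X
        + Polynomial.X ^ 2)).natDegree ≤ 2 * s.card ∧
    (∏ j ∈ s, (1 - Polynomial.C (u j ^ 2 + (u j ^ 2)⁻¹) * Polynomial.X
        + Polynomial.X ^ 2)).reflect (2 * s.card)
      = ∏ j ∈ s, (1 - Polynomial.C (u j ^ 2 + (u j ^ 2)⁻¹) * Polynomial.X
        + Polynomial.X ^ 2) := by
  classical
  induction s using Finset.induction with
  | empty => simp
  | @insert a s ha ih =>
    rw [Finset.prod_insert ha, Finset.card_insert_of_notMem ha]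
    constructor
    · apply le_trans (Polynomial.natDegree_mul_le)
      have := natDegree_quad (K := K) (u a ^ 2 + (u a ^ 2)⁻¹)
      omega
    · rw [show 2 * (s.card + 1) = 2 + 2 * s.card by ring,
        Polynomial.reflect_mul _ _ (natDegree_quad _) ih.1, reflect_quad, ih.2]

lemma Pp_spec (i : Fin r) : (Pp u i).natDegree ≤ 2 * (r - 1) ∧
    (Pp u i).reflect (2 * (r - 1)) = Pp u i := by
  have hc : (Finset.univ.erase i).card = r - 1 := by
    rw [Finset.card_erase_of_mem (Finset.mem_univ i), Finset.card_univ, Fintype.card_fin]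
  have h := Pp_prop u (Finset.univ.erase i)
  rw [hc] at h
  exact h

lemma natDegree_phi (hr : 1 ≤ r) (i : Fin r) : (phi u i).natDegree ≤ 2 * r + 1 := by
  have h1 : (Polynomial.C (u i ^ 2 - (u i ^ 2)⁻¹) *
      (Polynomial.X - Polynomial.X ^ 2) : Polynomial K).natDegree ≤ 3 := by
    apply le_trans (Polynomial.natDegree_mul_le)
    have : (Polynomial.X - Polynomial.X ^ 2 : Polynomial K).natDegree ≤ 2 := by
      apply le_trans (Polynomial.natDegree_sub_le _ _)
      simp
    simp only [Polynomial.natDegree_C]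
    omega
  have h2 := (Pp_spec u i).1
  rw [phi]
  apply le_trans (Polynomial.natDegree_mul_le)
  omega

lemma reflect_phi (hr : 1 ≤ r) (i : Fin r) :
    (phi u i).reflect (2 * r + 1) = - phi u i := by
  have h1 : (Polynomial.C (u i ^ 2 - (u i ^ 2)⁻¹) *
      (Polynomial.X - Polynomial.X ^ 2) : Polynomial K).natDegree ≤ 3 := by
    apply le_trans (Polynomial.natDegree_mul_le)
    have : (Polynomial.X - Polynomial.X ^ 2 : Polynomial K).natDegree ≤ 2 := by
      apply le_trans (Polynomial.natDegree_sub_le _ _)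
      simp
    simp only [Polynomial.natDegree_C]
    omega
  have hP := Pp_spec u i
  have hsplit : 2 * r + 1 = 3 + 2 * (r - 1) := by omega
  rw [phi, hsplit, Polynomial.reflect_mul _ _ h1 hP.1, hP.2]
  have hCX : (Polynomial.C (u i ^ 2 - (u i ^ 2)⁻¹) *
      (Polynomial.X - Polynomial.X ^ 2) : Polynomial K).reflect 3
      = - (Polynomial.C (u i ^ 2 - (u i ^ 2)⁻¹) * (Polynomial.X - Polynomial.X ^ 2)) := by
    have : (Polynomial.C (u i ^ 2 - (u i ^ 2)⁻¹) *
        (Polynomial.X - Polynomial.X ^ 2) : Polynomial K)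
        = Polynomial.C (u i ^ 2 - (u i ^ 2)⁻¹) * Polynomial.X ^ 1
          + Polynomial.C (-(u i ^ 2 - (u i ^ 2)⁻¹)) * Polynomial.X ^ 2 := by
      simp only [map_neg, pow_one]
      ring
    rw [this, Polynomial.reflect_add, Polynomial.reflect_C_mul_X_pow,
      Polynomial.reflect_C_mul_X_pow]
    norm_num [Polynomial.revAt_le]
    ring
  rw [hCX]
  ring

lemma coeff_phi_zero (i : Fin r) : (phi u i).coeff 0 = 0 := by
  rw [phi, Polynomial.mul_coeff_zero, Polynomial.mul_coeff_zero]
  simp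

end main
end SpinJT

namespace SpinJT

section series
variable {K : Type*} [Field K] {r : ℕ} (u : Fin r → K)

/-- The series `∑ (q_i^n - q_i^{-n}) t^n`. -/
noncomputable def Sser (i : Fin r) : PowerSeries K :=
  PowerSeries.mk fun n => (u i ^ 2) ^ n - ((u i ^ 2)⁻¹) ^ n

/-- The "denominator" `∏ (1 - x t)` over all `2r+1` variables. -/
noncomputable def Eser : PowerSeries K :=
  ∏ t, (1 - PowerSeries.C (R := K) (vars u t) * PowerSeries.X)

private lemma Sser_eq (i : Fin r) : Sser u i
    = (PowerSeries.mk fun n => (u i ^ 2) ^ n)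
      - (PowerSeries.mk fun n => ((u i ^ 2)⁻¹) ^ n) := by
  ext n; simp [Sser]

lemma quad_coe (hu : ∀ i, u i ≠ 0) (j : Fin r) :
    ((1 - Polynomial.C (u j ^ 2 + (u j ^ 2)⁻¹) * Polynomial.X + Polynomial.X ^ 2 :
        Polynomial K) : PowerSeries K)
      = (1 - PowerSeries.C (R := K) (u j ^ 2) * PowerSeries.X)
        * (1 - PowerSeries.C (R := K) ((u j ^ 2)⁻¹) * PowerSeries.X) := by
  have hq : (u j ^ 2) * (u j ^ 2)⁻¹ = 1 := mul_inv_cancel₀ (pow_ne_zero _ (hu j))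
  have hC : PowerSeries.C (R := K) (u j ^ 2) * PowerSeries.C (R := K) ((u j ^ 2)⁻¹) = 1 := by
    rw [← map_mul, hq, map_one]
  push_cast [Polynomial.coe_add, Polynomial.coe_sub, Polynomial.coe_one, Polynomial.coe_mul,
    Polynomial.coe_C, Polynomial.coe_X, Polynomial.coe_pow, map_add]
  linear_combination (-(PowerSeries.X ^ 2 : PowerSeries K)) * hC

lemma Sser_mul (hu : ∀ i, u i ≠ 0) (i : Fin r) :
    Sser u i * ((1 - PowerSeries.C (R := K) (u i ^ 2) * PowerSeries.X)
        * (1 - PowerSeries.C (R := K) ((u i ^ 2)⁻¹) * PowerSeries.X))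
      = PowerSeries.C (R := K) (u i ^ 2 - (u i ^ 2)⁻¹) * PowerSeries.X := by
  have h1 := geom (u i ^ 2)
  have h2 := geom ((u i ^ 2)⁻¹)
  rw [Sser_eq, map_sub]
  linear_combination (1 - PowerSeries.C (R := K) ((u i ^ 2)⁻¹) * PowerSeries.X) * h1
    - (1 - PowerSeries.C (R := K) (u i ^ 2) * PowerSeries.X) * h2

lemma Eser_split (i : Fin r) : Eser u =
    ((1 - PowerSeries.C (R := K) (u i ^ 2) * PowerSeries.X)
      * (1 - PowerSeries.C (R := K) ((u i ^ 2)⁻¹) * PowerSeries.X))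
    * ((1 - PowerSeries.X) * ∏ j ∈ Finset.univ.erase i,
        ((1 - PowerSeries.C (R := K) (u j ^ 2) * PowerSeries.X)
          * (1 - PowerSeries.C (R := K) ((u j ^ 2)⁻¹) * PowerSeries.X))) := by
  rw [Eser, Fintype.prod_sum_type, Fintype.prod_sum_type]
  simp only [vars, Sum.elim_inl, Sum.elim_inr, map_one]
  rw [← Finset.mul_prod_erase _ (fun a => 1 - PowerSeries.C (R := K) (u a ^ 2) * PowerSeries.X)
      (Finset.mem_univ i),
    ← Finset.mul_prod_erase _ (fun a => 1 - PowerSeries.C (R := K) ((u a ^ 2)⁻¹) * PowerSeries.X)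
      (Finset.mem_univ i),
    Finset.prod_mul_distrib]
  have hunit : ∏ _x : Unit, (1 - 1 * PowerSeries.X : PowerSeries K)
      = 1 - PowerSeries.X := by simp
  rw [hunit]
  ring

lemma phi_coe (hu : ∀ i, u i ≠ 0) (i : Fin r) :
    ((phi u i : Polynomial K) : PowerSeries K)
      = PowerSeries.C (R := K) (u i ^ 2 - (u i ^ 2)⁻¹) * PowerSeries.X
        * ((1 - PowerSeries.X) * ∏ j ∈ Finset.univ.erase i,
            ((1 - PowerSeries.C (R := K) (u j ^ 2) * PowerSeries.X)
              * (1 - PowerSeries.C (R := K) ((u j ^ 2)⁻¹) * PowerSeries.X))) := by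
  rw [phi, Pp, ← Polynomial.coeToPowerSeries.ringHom_apply, map_mul, map_mul, map_prod]
  have hfac : ∀ j ∈ Finset.univ.erase i,
      Polynomial.coeToPowerSeries.ringHom
        (1 - Polynomial.C (u j ^ 2 + (u j ^ 2)⁻¹) * Polynomial.X + Polynomial.X ^ 2)
      = (1 - PowerSeries.C (R := K) (u j ^ 2) * PowerSeries.X)
        * (1 - PowerSeries.C (R := K) ((u j ^ 2)⁻¹) * PowerSeries.X) := by
    intro j _
    rw [Polynomial.coeToPowerSeries.ringHom_apply, quad_coe u hu j]
  rw [Finset.prod_congr rfl hfac]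
  rw [Polynomial.coeToPowerSeries.ringHom_apply, Polynomial.coeToPowerSeries.ringHom_apply,
    Polynomial.coe_C]
  have hX : ((Polynomial.X - Polynomial.X ^ 2 : Polynomial K) : PowerSeries K)
      = PowerSeries.X * (1 - PowerSeries.X) := by
    push_cast [Polynomial.coe_sub, Polynomial.coe_pow, Polynomial.coe_X]
    ring
  rw [hX]
  ring

lemma phi_mul_Hser (hu : ∀ i, u i ≠ 0) (i : Fin r) :
    ((phi u i : Polynomial K) : PowerSeries K) * Hser (vars u) = Sser u i := by
  have hE : Hser (vars u) * Eser u = 1 := hser_mul_prod (vars u)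
  have hSE : Sser u i * Eser u = ((phi u i : Polynomial K) : PowerSeries K) := by
    rw [Eser_split u i, ← mul_assoc, Sser_mul u hu i, phi_coe u hu i]
  calc ((phi u i : Polynomial K) : PowerSeries K) * Hser (vars u)
      = (Sser u i * Eser u) * Hser (vars u) := by rw [hSE]
    _ = Sser u i * (Hser (vars u) * Eser u) := by ring
    _ = Sser u i := by rw [hE, mul_one]

end series
end SpinJT

namespace SpinJT

section entry
variable {K : Type*} [Field K] {r : ℕ} (u : Fin r → K)

lemma wsym (hr : 1 ≤ r) (i : Fin r) {d : ℕ} (hd : d ≤ 2 * r + 1) :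
    (phi u i).coeff (2 * r + 1 - d) = -(phi u i).coeff d := by
  have h := congrArg (fun p => Polynomial.coeff p d) (reflect_phi u hr i)
  simp only [Polynomial.coeff_reflect, Polynomial.coeff_neg] at h
  rwa [Polynomial.revAt_le hd] at h

lemma entry (hr : 1 ≤ r) (hu : ∀ i, u i ≠ 0) (i : Fin r) (l : ℕ) :
    (u i ^ 2) ^ l - ((u i ^ 2)⁻¹) ^ l
      = ∑ k ∈ Finset.range r, (phi u i).coeff (r - k) *
          (hpoly (vars u) ((l : ℤ) - r + k) - hpoly (vars u) ((l : ℤ) - r - k - 1)) := by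
  set w : ℕ → K := fun d => (phi u i).coeff d with hw
  set F : ℕ → K := fun d => w d * hpoly (vars u) ((l : ℤ) - d) with hF
  have step1 : (u i ^ 2) ^ l - ((u i ^ 2)⁻¹) ^ l = ∑ d ∈ Finset.range (l + 1), F d := by
    have h0 : (u i ^ 2) ^ l - ((u i ^ 2)⁻¹) ^ l = PowerSeries.coeff (R := K) l (Sser u i) := by
      simp [Sser]
    rw [h0, ← phi_mul_Hser u hu i, PowerSeries.coeff_mul,
      Finset.Nat.sum_antidiagonal_eq_sum_range_succ_mk]
    apply Finset.sum_congr rfl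
    intro d hd
    simp only [Finset.mem_range] at hd
    rw [Polynomial.coeff_coe, Hser, PowerSeries.coeff_mk, hF, hw]
    congr 2
    omega
  have step2 : ∑ d ∈ Finset.range (l + 1), F d = ∑ d ∈ Finset.range (2 * r + 2), F d := by
    have e1 : ∑ d ∈ Finset.range (l + 1), F d
        = ∑ d ∈ Finset.range (max (l + 1) (2 * r + 2)), F d := by
      apply Finset.sum_subset (Finset.range_subset_range.2 (le_max_left (l+1) (2*r+2)))
      intro d _ hd
      simp only [Finset.mem_range, not_lt] at hd
      have hneg : ((l : ℤ) - d) < 0 := by omega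
      simp only [hF, hpoly_neg _ hneg, mul_zero]
    have e2 : ∑ d ∈ Finset.range (2 * r + 2), F d
        = ∑ d ∈ Finset.range (max (l + 1) (2 * r + 2)), F d := by
      apply Finset.sum_subset (Finset.range_subset_range.2 (le_max_right (l+1) (2*r+2)))
      intro d _ hd
      simp only [Finset.mem_range, not_lt] at hd
      have hdeg : (phi u i).natDegree < d := lt_of_le_of_lt (natDegree_phi u hr i) (by omega)
      simp only [hF, hw, Polynomial.coeff_eq_zero_of_natDegree_lt hdeg, zero_mul]
    rw [e1, e2]
  have step3 : ∑ d ∈ Finset.range (2 * r + 2), F d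
      = ∑ k ∈ Finset.range (r + 1), F (r - k) + ∑ k ∈ Finset.range (r + 1), F (r + 1 + k) := by
    have e3 : ∑ d ∈ Finset.range (2 * r + 2), F d
        = ∑ d ∈ Finset.Ico 0 (r + 1), F d + ∑ d ∈ Finset.Ico (r + 1) (2 * r + 2), F d := by
      rw [Finset.sum_Ico_consecutive F (Nat.zero_le _) (by omega : r + 1 ≤ 2 * r + 2),
        Finset.range_eq_Ico]
    have e4 : ∑ d ∈ Finset.Ico 0 (r + 1), F d = ∑ k ∈ Finset.range (r + 1), F (r - k) := by
      rw [← Finset.range_eq_Ico, ← Finset.sum_range_reflect]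
      apply Finset.sum_congr rfl
      intro k hk
      rw [show r + 1 - 1 - k = r - k by omega]
    have e5 : ∑ d ∈ Finset.Ico (r + 1) (2 * r + 2), F d
        = ∑ k ∈ Finset.range (r + 1), F (r + 1 + k) := by
      rw [Finset.sum_Ico_eq_sum_range]
      rw [show 2 * r + 2 - (r + 1) = r + 1 by omega]
    rw [e3, e4, e5]
  have hw0 : w 0 = 0 := coeff_phi_zero u i
  have hwtop : w (2 * r + 1) = 0 := by
    have := wsym u hr i (d := 0) (by omega)
    simp only [Nat.sub_zero] at this
    simp only [hw]
    rw [this, coeff_phi_zero u i, neg_zero]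
  rw [step1, step2, step3, Finset.sum_range_succ, Finset.sum_range_succ]
  have hF0 : F (r - r) = 0 := by
    simp only [hF, Nat.sub_self, hw0, zero_mul]
  have hFtop : F (r + 1 + r) = 0 := by
    have h : r + 1 + r = 2 * r + 1 := by omega
    simp only [hF, h, hwtop, zero_mul]
  rw [hF0, hFtop, add_zero, add_zero, ← Finset.sum_add_distrib]
  apply Finset.sum_congr rfl
  intro k hk
  simp only [Finset.mem_range] at hk
  have hsym : w (r + 1 + k) = - w (r - k) := by
    have h := wsym u hr i (d := r + 1 + k) (by omega)
    have h2 : 2 * r + 1 - (r + 1 + k) = r - k := by omega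
    rw [h2] at h
    simp only [hw]
    rw [h, neg_neg]
  have harg1 : (l : ℤ) - ((r - k : ℕ) : ℤ) = (l : ℤ) - r + k := by omega
  have harg2 : (l : ℤ) - ((r + 1 + k : ℕ) : ℤ) = (l : ℤ) - r - k - 1 := by push_cast; ring
  simp only [hF]
  rw [harg1, harg2, hsym]
  ring

end entry
end SpinJT

namespace SpinJT

section matrices
variable {K : Type*} [Field K] {r : ℕ} (u : Fin r → K)

noncomputable def cmat : Matrix (Fin r) (Fin r) K :=
  Matrix.of fun i k => (phi u i).coeff (r - k.val)

noncomputable def Bmat (l : Fin r → ℕ) : Matrix (Fin r) (Fin r) K :=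
  Matrix.of fun k j => hpoly (vars u) ((l j : ℤ) - r + k.val)
    - hpoly (vars u) ((l j : ℤ) - r - k.val - 1)

noncomputable def Amat (l : Fin r → ℕ) : Matrix (Fin r) (Fin r) K :=
  Matrix.of fun i j => (u i ^ 2) ^ (l j) - ((u i ^ 2)⁻¹) ^ (l j)

lemma factor (hr : 1 ≤ r) (hu : ∀ i, u i ≠ 0) (l : Fin r → ℕ) :
    Amat u l = cmat u * Bmat u l := by
  ext i j
  rw [Matrix.mul_apply]
  simp only [Amat, cmat, Bmat, Matrix.of_apply]
  rw [entry u hr hu i (l j)]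
  exact (Fin.sum_univ_eq_sum_range (fun k => (phi u i).coeff (r - k) *
    (hpoly (vars u) ((l j : ℤ) - r + k) - hpoly (vars u) ((l j : ℤ) - r - k - 1))) r).symm

lemma detB0 : (Bmat u (fun j => r - j.val)).det = 1 := by
  have htri : ∀ k j : Fin r, k < j → Bmat u (fun j => r - j.val) k j = 0 := by
    intro k j hkj
    have hj : j.val < r := j.isLt
    have h1 : (((r - j.val : ℕ) : ℤ) - r + k.val) < 0 := by
      have : k.val < j.val := hkj
      omega
    have h2 : (((r - j.val : ℕ) : ℤ) - r - k.val - 1) < 0 := by omega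
    simp only [Bmat, Matrix.of_apply, hpoly_neg _ h1, hpoly_neg _ h2, sub_zero]
  rw [Matrix.det_of_lowerTriangular _ (fun k j hkj => htri k j hkj)]
  apply Finset.prod_eq_one
  intro j _
  have hj : j.val < r := j.isLt
  have h1 : (((r - j.val : ℕ) : ℤ) - r + j.val) = 0 := by omega
  have h2 : (((r - j.val : ℕ) : ℤ) - r - j.val - 1) < 0 := by omega
  simp only [Bmat, Matrix.of_apply, h1, hpoly_neg _ h2, sub_zero, hpoly_zero]

lemma telescope (v w : K) (hvw : v * w = 1) (n : ℕ) :
    ∑ k ∈ Finset.range n, (-1 : K) ^ (n - 1 - k) * ((v + w) * (v ^ (2 * k + 1) - w ^ (2 * k + 1)))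
      = v ^ (2 * n) - w ^ (2 * n) := by
  induction n with
  | zero => simp
  | succ n ih =>
    rw [Finset.sum_range_succ]
    have hlast : (n + 1 - 1 - n) = 0 := by omega
    rw [hlast, pow_zero, one_mul]
    have hcongr : ∑ k ∈ Finset.range n,
        (-1 : K) ^ (n + 1 - 1 - k) * ((v + w) * (v ^ (2 * k + 1) - w ^ (2 * k + 1)))
        = - ∑ k ∈ Finset.range n,
        (-1 : K) ^ (n - 1 - k) * ((v + w) * (v ^ (2 * k + 1) - w ^ (2 * k + 1))) := by
      rw [← Finset.sum_neg_distrib]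
      apply Finset.sum_congr rfl
      intro k hk
      simp only [Finset.mem_range] at hk
      rw [show n + 1 - 1 - k = (n - 1 - k) + 1 by omega, pow_succ]
      ring
    rw [hcongr, ih]
    have h2 : 2 * (n + 1) = 2 * n + 2 := by ring
    rw [h2]
    linear_combination (v ^ (2 * n) - w ^ (2 * n)) * hvw

end matrices
end SpinJT

namespace SpinJT

section detA0
variable {K : Type*} [Field K] {r : ℕ} (u : Fin r → K)

noncomputable def Cmat : Matrix (Fin r) (Fin r) K :=
  Matrix.of fun i j => u i ^ (2 * (r : ℤ) - 1 - 2 * (j.val : ℤ))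
    - u i ^ (-(2 * (r : ℤ) - 1 - 2 * (j.val : ℤ)))

lemma Cmat_entry (hu : ∀ i, u i ≠ 0) (i j : Fin r) :
    Cmat u i j = (u i) ^ (2 * (r - 1 - j.val) + 1) - ((u i)⁻¹) ^ (2 * (r - 1 - j.val) + 1) := by
  have hj : j.val < r := j.isLt
  have he : (2 * (r : ℤ) - 1 - 2 * (j.val : ℤ)) = ((2 * (r - 1 - j.val) + 1 : ℕ) : ℤ) := by
    omega
  rw [Cmat, Matrix.of_apply, he, zpow_natCast, zpow_neg, zpow_natCast, inv_pow]

noncomputable def Umat : Matrix (Fin r) (Fin r) K :=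
  Matrix.of fun k j => if (j.val : ℕ) ≤ k.val then (-1 : K) ^ (k.val - j.val) else 0

lemma detU : (Umat : Matrix (Fin r) (Fin r) K).det = 1 := by
  have htri : ∀ k j : Fin r, k < j → (Umat : Matrix (Fin r) (Fin r) K) k j = 0 := by
    intro k j hkj
    have : ¬ (j.val ≤ k.val) := by exact not_le.2 hkj
    simp only [Umat, Matrix.of_apply, if_neg this]
  rw [Matrix.det_of_lowerTriangular _ (fun k j hkj => htri k j hkj)]
  apply Finset.prod_eq_one
  intro j _
  simp [Umat]

lemma A0_eq (hu : ∀ i, u i ≠ 0) :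
    Amat u (fun j => r - j.val)
      = Matrix.diagonal (fun i => u i + (u i)⁻¹) * Cmat u * Umat := by
  ext i j
  rw [Matrix.mul_apply]
  have hdiag : ∀ k, (Matrix.diagonal (fun i => u i + (u i)⁻¹) * Cmat u) i k
      = (u i + (u i)⁻¹) * Cmat u i k := by
    intro k
    rw [Matrix.diagonal_mul]
  simp only [hdiag]
  have hentry : ∀ k : Fin r, (u i + (u i)⁻¹) * Cmat u i k * Umat k j
      = (fun k : ℕ => if j.val ≤ k then
          (-1 : K) ^ (k - j.val) * ((u i + (u i)⁻¹) *
            ((u i) ^ (2 * (r - 1 - k) + 1) - ((u i)⁻¹) ^ (2 * (r - 1 - k) + 1)))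
        else 0) k.val := by
    intro k
    rw [Cmat_entry u hu i k]
    simp only [Umat, Matrix.of_apply]
    by_cases h : j.val ≤ k.val
    · rw [if_pos h, if_pos h]; ring
    · rw [if_neg h, if_neg h, mul_zero]
  rw [Finset.sum_congr rfl (fun k _ => hentry k),
    Fin.sum_univ_eq_sum_range (fun k : ℕ => if j.val ≤ k then
          (-1 : K) ^ (k - j.val) * ((u i + (u i)⁻¹) *
            ((u i) ^ (2 * (r - 1 - k) + 1) - ((u i)⁻¹) ^ (2 * (r - 1 - k) + 1)))
        else 0) r]
  have hsub : ∑ k ∈ Finset.range r, (fun k : ℕ => if j.val ≤ k then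
          (-1 : K) ^ (k - j.val) * ((u i + (u i)⁻¹) *
            ((u i) ^ (2 * (r - 1 - k) + 1) - ((u i)⁻¹) ^ (2 * (r - 1 - k) + 1)))
        else 0) k
      = ∑ k ∈ Finset.Ico j.val r, (fun k : ℕ => if j.val ≤ k then
          (-1 : K) ^ (k - j.val) * ((u i + (u i)⁻¹) *
            ((u i) ^ (2 * (r - 1 - k) + 1) - ((u i)⁻¹) ^ (2 * (r - 1 - k) + 1)))
        else 0) k := by
    apply (Finset.sum_subset ?_ ?_).symm
    · intro k hk
      simp only [Finset.mem_Ico] at hk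
      simp only [Finset.mem_range]
      exact hk.2
    · intro k hk hnk
      simp only [Finset.mem_range] at hk
      simp only [Finset.mem_Ico, not_and, not_lt] at hnk
      have : ¬ (j.val ≤ k) := fun hc => absurd hk (not_lt.2 (hnk hc))
      rw [if_neg this]
  rw [hsub, Finset.sum_Ico_eq_sum_range]
  have hdrop : ∀ k ∈ Finset.range (r - j.val), (fun k : ℕ => if j.val ≤ k then
          (-1 : K) ^ (k - j.val) * ((u i + (u i)⁻¹) *
            ((u i) ^ (2 * (r - 1 - k) + 1) - ((u i)⁻¹) ^ (2 * (r - 1 - k) + 1)))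
        else 0) (j.val + k)
      = (-1 : K) ^ ((r - j.val) - 1 - ((r - j.val) - 1 - k)) * ((u i + (u i)⁻¹) *
          ((u i) ^ (2 * ((r - j.val) - 1 - k) + 1)
            - ((u i)⁻¹) ^ (2 * ((r - j.val) - 1 - k) + 1))) := by
    intro k hk
    simp only [Finset.mem_range] at hk
    have hj : j.val < r := j.isLt
    beta_reduce
    rw [if_pos (by omega : j.val ≤ j.val + k)]
    rw [show r - 1 - (j.val + k) = (r - j.val) - 1 - k by omega,
      show j.val + k - j.val = (r - j.val) - 1 - ((r - j.val) - 1 - k) by omega]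
  rw [Finset.sum_congr rfl hdrop,
    Finset.sum_range_reflect (fun m => (-1 : K) ^ ((r - j.val) - 1 - m) * ((u i + (u i)⁻¹) *
      ((u i) ^ (2 * m + 1) - ((u i)⁻¹) ^ (2 * m + 1)))) (r - j.val)]
  rw [telescope (u i) ((u i)⁻¹) (mul_inv_cancel₀ (hu i)) (r - j.val)]
  simp only [Amat, Matrix.of_apply]
  rw [← pow_mul, ← inv_pow, ← pow_mul]

lemma detA0 (hu : ∀ i, u i ≠ 0) :
    (Amat u (fun j => r - j.val)).det = (∏ i, (u i + (u i)⁻¹)) * (Cmat u).det := by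
  rw [A0_eq u hu, Matrix.det_mul, Matrix.det_mul, detU, mul_one, Matrix.det_diagonal]

end detA0
end SpinJT

namespace SpinJT

theorem key {K : Type*} [Field K] {r : ℕ} (hr : 1 ≤ r) (u : Fin r → K) (hu : ∀ i, u i ≠ 0)
    (m : Fin r → ℤ) (hnonneg : ∀ j, 0 ≤ m j) :
    Matrix.det (Matrix.of fun i j : Fin r =>
        (u i ^ 2) ^ (m j + r - (j.val : ℤ)) - (u i ^ 2) ^ (-(m j + r - (j.val : ℤ)))) =
    (∏ i : Fin r, (u i + (u i)⁻¹)) *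
    Matrix.det (Matrix.of fun i j : Fin r =>
        hpoly (vars u) (m j + (i.val : ℤ) - (j.val : ℤ))
          - hpoly (vars u) (m j - (i.val : ℤ) - (j.val : ℤ) - 1)) *
    Matrix.det (Cmat u) := by
  set l : Fin r → ℕ := fun j => (m j + r - j.val).toNat with hl
  have hlc : ∀ j : Fin r, ((l j : ℕ) : ℤ) = m j + r - j.val := by
    intro j
    have h1 := hnonneg j
    have h2 : (j.val : ℕ) < r := j.isLt
    simp only [hl]
    omega
  have hA : (Matrix.of fun i j : Fin r =>
      (u i ^ 2) ^ (m j + r - (j.val : ℤ)) - (u i ^ 2) ^ (-(m j + r - (j.val : ℤ))))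
      = Amat u l := by
    ext i j
    rw [Matrix.of_apply, ← hlc j, zpow_natCast, zpow_neg, zpow_natCast, ← inv_pow]
    rfl
  have hB : (Matrix.of fun i j : Fin r =>
      hpoly (vars u) (m j + (i.val : ℤ) - (j.val : ℤ))
        - hpoly (vars u) (m j - (i.val : ℤ) - (j.val : ℤ) - 1))
      = Bmat u l := by
    ext i j
    rw [Matrix.of_apply, Bmat, Matrix.of_apply, hlc j]
    rw [show m j + r - j.val - r + i.val = m j + (i.val : ℤ) - (j.val : ℤ) by ring,
      show m j + r - j.val - r - i.val - 1 = m j - (i.val : ℤ) - (j.val : ℤ) - 1 by ring]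
  have hdetc : (cmat u).det = (∏ i : Fin r, (u i + (u i)⁻¹)) * (Cmat u).det := by
    have h0 := factor u hr hu (fun j => r - j.val)
    have := congrArg Matrix.det h0
    rw [Matrix.det_mul, detB0, mul_one] at this
    rw [← this, detA0 u hu]
  rw [hA, hB, factor u hr hu l, Matrix.det_mul, hdetc]
  ring

end SpinJT

/-- Jacobi–Trudy identity for the spinor representations of Spin(2r+1), in alternant form. -/
theorem spin_odd_spinor_jacobi_trudy (r : ℕ) (hr : 1 ≤ r)
    (m : Fin r → ℤ) (hanti : Antitone m) (hnonneg : ∀ j, 0 ≤ m j) :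
    let K := FractionRing (MvPolynomial (Fin r) ℚ)
    let u : Fin r → K := fun i => algebraMap (MvPolynomial (Fin r) ℚ) K (X i)
    let q : Fin r → K := fun i => u i ^ 2
    let H : ℤ → K := hpoly (Sum.elim q (Sum.elim (fun _ : Unit => 1) fun i => (q i)⁻¹))
    Matrix.det (Matrix.of fun i j : Fin r =>
        q i ^ (m j + r - (j.val : ℤ)) - q i ^ (-(m j + r - (j.val : ℤ)))) =
    (∏ i : Fin r, (u i + (u i)⁻¹)) *
    Matrix.det (Matrix.of fun i j : Fin r =>
        H (m j + (i.val : ℤ) - (j.val : ℤ)) - H (m j - (i.val : ℤ) - (j.val : ℤ) - 1)) *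
    Matrix.det (Matrix.of fun i j : Fin r =>
        u i ^ (2 * (r : ℤ) - 1 - 2 * (j.val : ℤ)) -
        u i ^ (-(2 * (r : ℤ) - 1 - 2 * (j.val : ℤ)))) := by
  intro K u q H
  have hu : ∀ i, u i ≠ 0 := by
    intro i
    have hinj : Function.Injective (algebraMap (MvPolynomial (Fin r) ℚ) K) :=
      IsFractionRing.injective _ _
    simp only [u, ne_eq, map_eq_zero_iff _ hinj]
    exact MvPolynomial.X_ne_zero i
  exact SpinJT.key hr u hu m hnonneg
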